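/- arXiv:2408.03174 — 2 statements merged into one kernel-verified Lean document; each statement's English description precedes it below -/
import Mathlib

section
/- (Theorem 1) Let A and Ȧ be M×K complex matrices with AᴴA invertible, let Π⊥_A = I − A(AᴴA)⁻¹Aᴴ, let Δ = [A, Π⊥_A Ȧ] be the M×2K concatenated matrix, let L be an invertible 2K×2K complex matrix, and set C = ΔL. Assume CᴴC is invertible. Then for every pair of matrices X, Y taken from the set {A, Ȧ}, one has Xᴴ C (CᴴC)⁻¹ Cᴴ Y = Xᴴ Y. In particular Aᴴ C (CᴴC)⁻¹ Cᴴ A = AᴴA, Aᴴ C (CᴴC)⁻¹ Cᴴ Ȧ = AᴴȦ, Ȧᴴ C (CᴴC)⁻¹ Cᴴ A = ȦᴴA, and Ȧᴴ C (CᴴC)⁻¹ Cᴴ Ȧ = ȦᴴȦ. -/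
open Matrix

/-- (Theorem 1) Let `Δ = [A, Pp⊥_A Ȧ]`, `C = Δ L` with `L` invertible, and suppose
`AᴴA` and `CᴴC` are invertible. Then beamforming with `C` preserves all the
Fisher-information building blocks: for every `X, Y ∈ {A, Ȧ}`,
`Xᴴ C (CᴴC)⁻¹ Cᴴ Y = Xᴴ Y`. -/
theorem beamforming_no_information_loss
    {M K : ℕ}
    (A Adot : Matrix (Fin M) (Fin K) ℂ)
    (hA : Invertible (Aᴴ * A))
    (Pp : Matrix (Fin M) (Fin M) ℂ)
    (hPp : Pp = 1 - A * (Aᴴ * A)⁻¹ * Aᴴ)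
    (Δ : Matrix (Fin M) (Fin K ⊕ Fin K) ℂ)
    (hΔ : Δ = Matrix.fromCols A (Pp * Adot))
    (L : Matrix (Fin K ⊕ Fin K) (Fin K ⊕ Fin K) ℂ)
    (hL : Invertible L)
    (C : Matrix (Fin M) (Fin K ⊕ Fin K) ℂ)
    (hC : C = Δ * L)
    (hCC : Invertible (Cᴴ * C)) :
    ∀ X ∈ ({A, Adot} : Set (Matrix (Fin M) (Fin K) ℂ)),
      ∀ Y ∈ ({A, Adot} : Set (Matrix (Fin M) (Fin K) ℂ)),
        Xᴴ * (C * (Cᴴ * C)⁻¹ * Cᴴ) * Y = Xᴴ * Y := by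
  set P := C * (Cᴴ * C)⁻¹ * Cᴴ with hP
  have hPC : P * C = C := by
    calc P * C = C * ((Cᴴ * C)⁻¹ * (Cᴴ * C)) := by
          simp [hP, Matrix.mul_assoc]
      _ = C := by rw [Matrix.inv_mul_of_invertible]; simp
  have hPΔ : P * Δ = Δ := by
    have hΔ' : Δ = C * L⁻¹ := by
      rw [hC, Matrix.mul_assoc, Matrix.mul_inv_of_invertible, Matrix.mul_one]
    rw [hΔ'] at *
    rw [← Matrix.mul_assoc, hPC]
  have hPcols : P * A = A ∧ P * (Pp * Adot) = Pp * Adot := by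
    have := hPΔ
    rw [hΔ, Matrix.mul_fromCols] at this
    exact (Matrix.fromCols_ext_iff _ _ _ _).mp this
  have hPA : P * A = A := hPcols.1
  have hAdot : Adot = Pp * Adot + A * ((Aᴴ * A)⁻¹ * (Aᴴ * Adot)) := by
    rw [hPp]
    simp [Matrix.sub_mul, Matrix.mul_assoc]
  have hPAdot : P * Adot = Adot := by
    conv_lhs => rw [hAdot]
    rw [Matrix.mul_add, hPcols.2, ← Matrix.mul_assoc, hPA, ← hAdot]
  intro X hX Y hY
  have hPY : P * Y = Y := by
    rcases hY with hY | hY <;> subst hY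
    · exact hPA
    · exact hPAdot
  rw [Matrix.mul_assoc, hPY]
end

section
/- (Pointwise version of the SCA bound (35)) Let σ > 0, let J be an Mr×Mr Hermitian positive semidefinite complex matrix with positive semidefinite square root √J, let T̄ be Hermitian positive semidefinite, and let T be Hermitian positive definite with I − σ²T Hermitian positive definite. Define Ω̄ = I + √J · T̄ · √J. Then Ω̄ is Hermitian positive definite and log₂((det(J + T⁻¹)).re) − log₂((det(T⁻¹ − σ²I)).re) ≤ (1/ln 2)·Re(tr(Ω̄⁻¹ (I + √J · T · √J))) − Mr/ln 2 + log₂((det Ω̄).re) − log₂((det(I − σ²T)).re). -/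
open Matrix
open scoped ComplexOrder

/-- The square root of a positive semidefinite matrix, as defined in Mathlib (Dec 2024). -/
noncomputable def Matrix.PosSemidef.sqrt {n 𝕜 : Type*} [Fintype n] [DecidableEq n] [RCLike 𝕜]
    {A : Matrix n n 𝕜} (hA : A.PosSemidef) : Matrix n n 𝕜 :=
  hA.1.eigenvectorUnitary.1 * diagonal ((↑) ∘ Real.sqrt ∘ hA.1.eigenvalues) *
    (star hA.1.eigenvectorUnitary : Matrix n n 𝕜)

theorem Matrix.PosSemidef.posSemidef_sqrt {n 𝕜 : Type*} [Fintype n] [DecidableEq n] [RCLike 𝕜]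
    {A : Matrix n n 𝕜} (hA : A.PosSemidef) : hA.sqrt.PosSemidef := by
  unfold Matrix.PosSemidef.sqrt
  have hD : (diagonal ((↑) ∘ Real.sqrt ∘ hA.1.eigenvalues) : Matrix n n 𝕜).PosSemidef := by
    rw [Matrix.posSemidef_diagonal_iff]
    intro i
    simp only [Function.comp_apply]
    exact RCLike.ofReal_nonneg.mpr (Real.sqrt_nonneg _)
  have := hD.mul_mul_conjTranspose_same hA.1.eigenvectorUnitary.1
  simpa [Matrix.star_eq_conjTranspose] using this

theorem Matrix.PosSemidef.sqrt_mul_self {n 𝕜 : Type*} [Fintype n] [DecidableEq n] [RCLike 𝕜]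
    {A : Matrix n n 𝕜} (hA : A.PosSemidef) : hA.sqrt * hA.sqrt = A := by
  have hU : (star hA.1.eigenvectorUnitary : Matrix n n 𝕜) * hA.1.eigenvectorUnitary.1 = 1 :=
    Unitary.coe_star_mul_self _
  have hD : (diagonal ((↑) ∘ Real.sqrt ∘ hA.1.eigenvalues) : Matrix n n 𝕜) *
      diagonal ((↑) ∘ Real.sqrt ∘ hA.1.eigenvalues) = diagonal (RCLike.ofReal ∘ hA.1.eigenvalues) := by
    rw [diagonal_mul_diagonal]; congr 1; funext i
    simp only [Function.comp_apply, ← RCLike.ofReal_mul, Real.mul_self_sqrt (hA.eigenvalues_nonneg i)]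
  conv_rhs => rw [hA.1.spectral_theorem, Unitary.conjStarAlgAut_apply]
  unfold Matrix.PosSemidef.sqrt
  calc _ = hA.1.eigenvectorUnitary.1 * (diagonal ((↑) ∘ Real.sqrt ∘ hA.1.eigenvalues) *
        ((star hA.1.eigenvectorUnitary : Matrix n n 𝕜) * hA.1.eigenvectorUnitary.1) *
        diagonal ((↑) ∘ Real.sqrt ∘ hA.1.eigenvalues)) *
        (star hA.1.eigenvectorUnitary : Matrix n n 𝕜) := by simp only [Matrix.mul_assoc]
    _ = _ := by rw [hU, Matrix.mul_one, hD]


lemma aux_trace_eq_sum {n : ℕ} {A : Matrix (Fin n) (Fin n) ℂ} (hA : A.IsHermitian) :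
    A.trace = ∑ i, (hA.eigenvalues i : ℂ) := by
  conv_lhs => rw [hA.spectral_theorem, Unitary.conjStarAlgAut_apply]
  rw [Matrix.trace_mul_cycle, Matrix.mem_unitaryGroup_iff'.mp hA.eigenvectorUnitary.2, one_mul,
    trace_diagonal]
  simp

lemma aux_conj_posDef {n : ℕ} {A C : Matrix (Fin n) (Fin n) ℂ} (hA : A.PosDef) (hC : IsUnit C) :
    (Cᴴ * A * C).PosDef := by
  refine Matrix.PosDef.of_dotProduct_mulVec_pos (Matrix.isHermitian_conjTranspose_mul_mul C hA.1) fun x hx => ?_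
  have hinj := Matrix.mulVec_injective_iff_isUnit.mpr hC
  have hx' : C *ᵥ x ≠ 0 := fun h => hx (hinj (h.trans (Matrix.mulVec_zero C).symm))
  simpa only [star_mulVec, dotProduct_mulVec, vecMul_vecMul] using hA.dotProduct_mulVec_pos hx'

lemma aux_det_re_pos {n : ℕ} {A : Matrix (Fin n) (Fin n) ℂ} (hA : A.PosDef) :
    0 < A.det.re ∧ A.det.im = 0 := by
  have := hA.det_pos
  rw [Complex.lt_def] at this
  simpa using ⟨this.1, this.2.symm⟩

lemma aux_logdet {n : ℕ} {M : Matrix (Fin n) (Fin n) ℂ} (hM : M.PosDef) :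
    Real.log M.det.re ≤ M.trace.re - n := by
  have hdet : M.det.re = ∏ i, hM.1.eigenvalues i := by
    rw [hM.1.det_eq_prod_eigenvalues, ← RCLike.ofReal_prod (K := ℂ)]
    exact RCLike.ofReal_re (K := ℂ) _
  have htr : M.trace.re = ∑ i, hM.1.eigenvalues i := by
    rw [aux_trace_eq_sum hM.1, ← Complex.ofReal_sum]
    exact Complex.ofReal_re _
  rw [hdet, htr, Real.log_prod (fun i _ => (hM.eigenvalues_pos i).ne')]
  calc ∑ i, Real.log (hM.1.eigenvalues i) ≤ ∑ i, (hM.1.eigenvalues i - 1) :=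
        Finset.sum_le_sum fun i _ => Real.log_le_sub_one_of_pos (hM.eigenvalues_pos i)
    _ = (∑ i, hM.1.eigenvalues i) - n := by
        rw [Finset.sum_sub_distrib]; simp

lemma aux_logdet2 {n : ℕ} {A B : Matrix (Fin n) (Fin n) ℂ} (hA : A.PosDef) (hB : B.PosDef) :
    Real.log B.det.re ≤ (A⁻¹ * B).trace.re - n + Real.log A.det.re := by
  have hAinv : A⁻¹.PosDef := hA.inv
  set C := hAinv.posSemidef.sqrt with hCdef
  have hC : C.PosSemidef := hAinv.posSemidef.posSemidef_sqrt
  have hCC : C * C = A⁻¹ := hAinv.posSemidef.sqrt_mul_self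
  -- C is a unit
  have hCunit : IsUnit C := by
    have h1 : IsUnit A⁻¹ := hAinv.isUnit
    have : IsUnit (C.det * C.det) := by
      rw [← Matrix.det_mul, hCC]
      exact hAinv.det_pos.ne'.isUnit
    exact (Matrix.isUnit_iff_isUnit_det C).mpr (isUnit_of_mul_isUnit_left this)
  have hM : (Cᴴ * B * C).PosDef := aux_conj_posDef hB hCunit
  have hCH : Cᴴ = C := hC.1
  have hMdet : (Cᴴ * B * C).det = A⁻¹.det * B.det := by
    rw [Matrix.det_mul, Matrix.det_mul, hCH, ← hCC, Matrix.det_mul]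
    ring
  have hMtr : (Cᴴ * B * C).trace = (A⁻¹ * B).trace := by
    rw [hCH, Matrix.trace_mul_cycle, hCC]
  have key := aux_logdet hM
  rw [hMdet, hMtr] at key
  -- (A⁻¹.det * B.det).re = A⁻¹.det.re * B.det.re
  obtain ⟨hAre, hAim⟩ := aux_det_re_pos hAinv
  obtain ⟨hBre, hBim⟩ := aux_det_re_pos hB
  rw [Complex.mul_re, hAim, hBim] at key
  simp only [mul_zero, sub_zero] at key
  rw [Real.log_mul hAre.ne' hBre.ne'] at key
  -- log A⁻¹.det.re = - log A.det.re
  obtain ⟨hAre', hAim'⟩ := aux_det_re_pos hA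
  have hmul : A⁻¹.det.re * A.det.re = 1 := by
    have : A⁻¹.det * A.det = 1 := by
      rw [← Matrix.det_mul, Matrix.nonsing_inv_mul A hA.det_pos.ne'.isUnit, Matrix.det_one]
    have := congrArg Complex.re this
    rwa [Complex.mul_re, hAim, hAim', mul_zero, sub_zero] at this
  have hloginv : Real.log A⁻¹.det.re = - Real.log A.det.re := by
    have := Real.log_mul hAre.ne' hAre'.ne'
    rw [hmul, Real.log_one] at this
    linarith
  rw [hloginv] at key
  linarith

/-- (Pointwise version of the SCA bound (35).) With `Ω̄ = I + √J T̄ √J`, the matrix `Ω̄`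
is Hermitian positive definite and the fronthaul rate in the variable `T` satisfies
`log₂ det(J + T⁻¹) − log₂ det(T⁻¹ − σ²I)
  ≤ (1/ln 2)·Re(tr(Ω̄⁻¹(I + √J T √J))) − Mr/ln 2 + log₂ det Ω̄ − log₂ det(I − σ²T)`. -/
theorem sca_bound_compression_covariance
    {Mr : ℕ} (σ : ℝ) (hσ : 0 < σ)
    (J : Matrix (Fin Mr) (Fin Mr) ℂ) (hJ : J.PosSemidef)
    (Tbar : Matrix (Fin Mr) (Fin Mr) ℂ) (hTbar : Tbar.PosSemidef)
    (T : Matrix (Fin Mr) (Fin Mr) ℂ) (hT : T.PosDef)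
    (hIT : (1 - ((σ : ℂ) ^ 2) • T).PosDef)
    (Ωbar : Matrix (Fin Mr) (Fin Mr) ℂ)
    (hΩbar : Ωbar = 1 + hJ.sqrt * Tbar * hJ.sqrt) :
    Ωbar.PosDef ∧
      Real.logb 2 (J + T⁻¹).det.re - Real.logb 2 (T⁻¹ - ((σ : ℂ) ^ 2) • 1).det.re ≤
        (1 / Real.log 2) * (Ωbar⁻¹ * (1 + hJ.sqrt * T * hJ.sqrt)).trace.re
          - (Mr : ℝ) / Real.log 2
          + Real.logb 2 Ωbar.det.re
          - Real.logb 2 (1 - ((σ : ℂ) ^ 2) • T).det.re := by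
  set S := hJ.sqrt with hSdef
  have hS : S.PosSemidef := hJ.posSemidef_sqrt
  have hSH : Sᴴ = S := hS.1
  have hSS : S * S = J := hJ.sqrt_mul_self
  have hPbar : (S * Tbar * S).PosSemidef := by
    have := hTbar.conjTranspose_mul_mul_same S; rwa [hSH] at this
  have hΩbarPD : Ωbar.PosDef := by
    rw [hΩbar]; exact Matrix.PosDef.one.add_posSemidef hPbar
  refine ⟨hΩbarPD, ?_⟩
  set Ω := 1 + S * T * S with hΩdef
  have hΩPD : Ω.PosDef := by
    have := hT.posSemidef.conjTranspose_mul_mul_same S; rw [hSH] at this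
    exact Matrix.PosDef.one.add_posSemidef this
  have hTunit : IsUnit T.det := hT.det_pos.ne'.isUnit
  have hTinv : T⁻¹.PosDef := hT.inv
  have hdet1 : (J + T⁻¹).det = T⁻¹.det * Ω.det := by
    have h1 : J + T⁻¹ = T⁻¹ * (T * J + 1) := by
      rw [Matrix.mul_add, Matrix.mul_one, ← Matrix.mul_assoc,
        Matrix.nonsing_inv_mul T hTunit, Matrix.one_mul]
    rw [h1, Matrix.det_mul]
    congr 1
    calc (T * J + 1).det = ((T * S) * S + 1).det := by rw [Matrix.mul_assoc, hSS]
      _ = (S * (T * S) + 1).det := Matrix.det_mul_add_one_comm _ _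
      _ = Ω.det := by rw [hΩdef, add_comm, ← Matrix.mul_assoc]
  have hdet2 : (T⁻¹ - ((σ : ℂ) ^ 2) • 1).det = T⁻¹.det * (1 - ((σ : ℂ) ^ 2) • T).det := by
    have h2 : T⁻¹ - ((σ : ℂ) ^ 2) • 1 = T⁻¹ * (1 - ((σ : ℂ) ^ 2) • T) := by
      rw [Matrix.mul_sub, Matrix.mul_one, Matrix.mul_smul,
        Matrix.nonsing_inv_mul T hTunit]
    rw [h2, Matrix.det_mul]
  obtain ⟨hre1, him1⟩ := aux_det_re_pos hTinv
  obtain ⟨hre2, him2⟩ := aux_det_re_pos hΩPD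
  obtain ⟨hre3, him3⟩ := aux_det_re_pos hΩbarPD
  obtain ⟨hre4, him4⟩ := aux_det_re_pos hIT
  have e1 : (J + T⁻¹).det.re = T⁻¹.det.re * Ω.det.re := by
    rw [hdet1, Complex.mul_re, him1, zero_mul, sub_zero]
  have e2 : (T⁻¹ - ((σ : ℂ) ^ 2) • 1).det.re
      = T⁻¹.det.re * (1 - ((σ : ℂ) ^ 2) • T).det.re := by
    rw [hdet2, Complex.mul_re, him1, zero_mul, sub_zero]
  have key := aux_logdet2 hΩbarPD hΩPD
  rw [e1, e2, Real.logb_mul hre1.ne' hre2.ne', Real.logb_mul hre1.ne' hre4.ne']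
  have hlog2 : 0 < Real.log 2 := Real.log_pos one_lt_two
  have h : Real.logb 2 Ω.det.re ≤
      1 / Real.log 2 * (Ωbar⁻¹ * Ω).trace.re - (Mr : ℝ) / Real.log 2
        + Real.logb 2 Ωbar.det.re := by
    rw [Real.logb, Real.logb, div_le_iff₀ hlog2]
    have h2 : (1 / Real.log 2 * (Ωbar⁻¹ * Ω).trace.re - (Mr : ℝ) / Real.log 2
        + Real.log Ωbar.det.re / Real.log 2) * Real.log 2
        = (Ωbar⁻¹ * Ω).trace.re - (Mr : ℝ) + Real.log Ωbar.det.re := by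
      field_simp
    rw [h2]
    exact key
  linarith
end
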